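/- Let X be a convex subset of a normed space and P, A nonempty disjoint subsets of X such that for every x ∈ X the distances d(x,P) and d(x,A) are attained, and no segment [p,a] with p ∈ P, a ∈ A is parallel to a nondegenerate segment contained in the unit sphere. Then the dominance region dom(P,A) = {x ∈ X : d(x,P) ≤ d(x,A)} equals the closure (in X) of {x ∈ X : d(x,P) < d(x,A)}. -/

import Mathlib

private lemma seg_on_sphere {E : Type*} [NormedAddCommGroup E] [NormedSpace ℝ E]
    (u v : E) (hu : ‖u‖ = 1) (hv : ‖v‖ = 1) (t : ℝ) (ht0 : 0 < t) (ht1 : t < 1)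
    (heq : ‖t • u + (1 - t) • v‖ = 1) :
    segment ℝ u v ⊆ Metric.sphere (0 : E) 1 := by
  rintro z ⟨a, b, ha, hb, hab, rfl⟩
  have hle : ‖a • u + b • v‖ ≤ 1 := by
    calc ‖a • u + b • v‖ ≤ ‖a • u‖ + ‖b • v‖ := norm_add_le _ _
    _ = |a| * ‖u‖ + |b| * ‖v‖ := by rw [norm_smul, norm_smul]; rfl
    _ = 1 := by rw [hu, hv, abs_of_nonneg ha, abs_of_nonneg hb]; linarith
  have hge : 1 ≤ ‖a • u + b • v‖ := by
    rcases le_or_gt a t with hat | hat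
    · have hb0 : (0:ℝ) < b := by linarith
      set μ : ℝ := (1 - t) / b with hμdef
      have hμ0 : 0 < μ := div_pos (by linarith) hb0
      have hμb : μ * b = 1 - t := by
        rw [hμdef]; exact div_mul_cancel₀ _ hb0.ne'
      have hμ1 : μ ≤ 1 := by rw [hμdef, div_le_one hb0]; linarith
      have hsum : μ * a + μ * b = μ := by rw [← mul_add, hab, mul_one]
      have hμa : μ * a + (1 - μ) = t := by linarith
      have key : t • u + (1 - t) • v = μ • (a • u + b • v) + (1 - μ) • u := by
        match_scalars <;> nlinarith [hμa, hμb]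
      have h2 : (1:ℝ) ≤ μ * ‖a • u + b • v‖ + (1 - μ) * 1 := by
        calc (1:ℝ) = ‖t • u + (1 - t) • v‖ := heq.symm
        _ = ‖μ • (a • u + b • v) + (1 - μ) • u‖ := by rw [key]
        _ ≤ ‖μ • (a • u + b • v)‖ + ‖(1 - μ) • u‖ := norm_add_le _ _
        _ = μ * ‖a • u + b • v‖ + (1 - μ) * 1 := by
            rw [norm_smul, norm_smul, hu, Real.norm_eq_abs, Real.norm_eq_abs,
              abs_of_nonneg hμ0.le, abs_of_nonneg (by linarith : (0:ℝ) ≤ 1 - μ)]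
      nlinarith
    · have ha0 : (0:ℝ) < a := lt_trans ht0 hat
      set μ : ℝ := t / a with hμdef
      have hμ0 : 0 < μ := div_pos ht0 ha0
      have hμa : μ * a = t := by
        rw [hμdef]; exact div_mul_cancel₀ _ ha0.ne'
      have hμ1 : μ ≤ 1 := by rw [hμdef, div_le_one ha0]; linarith
      have hsum : μ * a + μ * b = μ := by rw [← mul_add, hab, mul_one]
      have hμb : μ * b + (1 - μ) = 1 - t := by linarith
      have key : t • u + (1 - t) • v = μ • (a • u + b • v) + (1 - μ) • v := by
        match_scalars <;> nlinarith [hμa, hμb]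
      have h2 : (1:ℝ) ≤ μ * ‖a • u + b • v‖ + (1 - μ) * 1 := by
        calc (1:ℝ) = ‖t • u + (1 - t) • v‖ := heq.symm
        _ = ‖μ • (a • u + b • v) + (1 - μ) • v‖ := by rw [key]
        _ ≤ ‖μ • (a • u + b • v)‖ + ‖(1 - μ) • v‖ := norm_add_le _ _
        _ = μ * ‖a • u + b • v‖ + (1 - μ) * 1 := by
            rw [norm_smul, norm_smul, hv, Real.norm_eq_abs, Real.norm_eq_abs,
              abs_of_nonneg hμ0.le, abs_of_nonneg (by linarith : (0:ℝ) ≤ 1 - μ)]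
      nlinarith
  rw [Metric.mem_sphere, dist_zero_right]
  exact le_antisymm hle hge

theorem dom_eq_closure_of_strict
    {E : Type*} [NormedAddCommGroup E] [NormedSpace ℝ E]
    (X P A : Set E) (hX : Convex ℝ X) (hPX : P ⊆ X) (hAX : A ⊆ X)
    (hP : P.Nonempty) (hA : A.Nonempty) (hdisj : P ∩ A = ∅)
    (hattP : ∀ x ∈ X, ∃ p ∈ P, Metric.infDist x P = dist x p)
    (hattA : ∀ x ∈ X, ∃ a ∈ A, Metric.infDist x A = dist x a)
    (hpar : ∀ p ∈ P, ∀ a ∈ A, p ≠ a →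
      ¬ ∃ u v : E, u ≠ v ∧ segment ℝ u v ⊆ Metric.sphere (0 : E) 1 ∧
        (‖a - p‖⁻¹ • (a - p) = ‖v - u‖⁻¹ • (v - u) ∨
         ‖a - p‖⁻¹ • (a - p) = -(‖v - u‖⁻¹ • (v - u)))) :
    {x ∈ X | Metric.infDist x P ≤ Metric.infDist x A} =
      closure {x ∈ X | Metric.infDist x P < Metric.infDist x A} ∩ X := by
  ext x
  simp only [Set.mem_setOf_eq, Set.mem_inter_iff]
  constructor
  · rintro ⟨hxX, hle⟩
    refine ⟨?_, hxX⟩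
    rcases lt_or_eq_of_le hle with hlt | heq
    · exact subset_closure ⟨hxX, hlt⟩
    by_contra hncl
    rw [Metric.mem_closure_iff] at hncl
    push_neg at hncl
    obtain ⟨ε, hε, hball⟩ := hncl
    obtain ⟨p, hpP, hdp⟩ := hattP x hxX
    set r := Metric.infDist x P with hr
    have hrnn : (0:ℝ) ≤ r := by rw [hr]; exact Metric.infDist_nonneg
    have hr0 : 0 < r := by
      rcases lt_or_eq_of_le hrnn with h | h
      · exact h
      · exfalso
        obtain ⟨a0, ha0A, hda0⟩ := hattA x hxX
        have hxp : x = p := dist_eq_zero.mp (by rw [← hdp, ← h])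
        have hxa : x = a0 := dist_eq_zero.mp (by rw [← hda0, ← heq, ← h])
        have hpa : p = a0 := by rw [← hxp]; exact hxa
        have : p ∈ P ∩ A := ⟨hpP, by rw [hpa]; exact ha0A⟩
        rw [hdisj] at this; exact this
    have hxpnorm : ‖x - p‖ = r := by rw [← dist_eq_norm, ← hdp]
    set t : ℝ := min (1/2) (ε / (2 * r)) with htdef
    have ht0 : 0 < t := lt_min (by norm_num) (by positivity)
    have ht1 : t < 1 := lt_of_le_of_lt (min_le_left _ _) (by norm_num)
    have htε : t * r < ε := by
      have h1 : t ≤ ε / (2 * r) := min_le_right _ _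
      have h2 : t * r ≤ ε / (2 * r) * r := by nlinarith
      have h3 : ε / (2 * r) * r = ε / 2 := by field_simp
      linarith
    set y : E := x + t • (p - x) with hydef
    have hyX : y ∈ X := by
      have hy2 : y = (1 - t) • x + t • p := by rw [hydef]; module
      rw [hy2]
      exact hX hxX (hPX hpP) (by linarith) ht0.le (by ring)
    have hdyx : dist y x = t * r := by
      rw [dist_eq_norm]
      have hy2 : y - x = t • (p - x) := by rw [hydef]; module
      rw [hy2, norm_smul, Real.norm_eq_abs, abs_of_pos ht0, norm_sub_rev, hxpnorm]
    have hyA : Metric.infDist y A ≤ Metric.infDist y P := by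
      by_contra hcon
      push_neg at hcon
      have := hball y ⟨hyX, hcon⟩
      rw [dist_comm x y, hdyx] at this
      linarith
    have hyp : ‖y - p‖ = (1 - t) * r := by
      have hy2 : y - p = (1 - t) • (x - p) := by rw [hydef]; module
      rw [hy2, norm_smul, Real.norm_eq_abs, abs_of_pos (by linarith : (0:ℝ) < 1 - t),
        hxpnorm]
    have hdyP : Metric.infDist y P ≤ (1 - t) * r := by
      calc Metric.infDist y P ≤ dist y p := Metric.infDist_le_dist_of_mem hpP
      _ = (1 - t) * r := by rw [dist_eq_norm, hyp]
    obtain ⟨a, haA, hda⟩ := hattA y hyX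
    have hya : ‖y - a‖ ≤ (1 - t) * r := by
      rw [← dist_eq_norm, ← hda]; exact le_trans hyA hdyP
    have hxa_ge : r ≤ ‖x - a‖ := by
      rw [← dist_eq_norm]
      calc r = Metric.infDist x A := heq
      _ ≤ dist x a := Metric.infDist_le_dist_of_mem haA
    have hxy : ‖x - y‖ = t * r := by rw [← dist_eq_norm, dist_comm, hdyx]
    have htri : ‖x - a‖ ≤ t * r + (1 - t) * r := by
      calc ‖x - a‖ = ‖(x - y) + (y - a)‖ := by abel_nf
      _ ≤ ‖x - y‖ + ‖y - a‖ := norm_add_le _ _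
      _ ≤ t * r + (1 - t) * r := by rw [hxy]; linarith
    have hxa_eq : ‖x - a‖ = r := le_antisymm (by linarith [htri]) hxa_ge
    have hya_eq : ‖y - a‖ = (1 - t) * r := by
      have hdiff : (x - a) - (x - y) = y - a := by abel
      have hge : r - t * r ≤ ‖y - a‖ := by
        calc r - t * r ≤ |r - t * r| := le_abs_self _
        _ = |‖x - a‖ - ‖x - y‖| := by rw [hxa_eq, hxy]
        _ ≤ ‖(x - a) - (x - y)‖ := abs_norm_sub_norm_le _ _
        _ = ‖y - a‖ := by rw [hdiff]
      linarith
    -- unit vectors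
    obtain ⟨uh, huhdef⟩ : ∃ u : E, u = r⁻¹ • (x - p) := ⟨_, rfl⟩
    obtain ⟨vh, hvhdef⟩ : ∃ v : E, v = ((1 - t) * r)⁻¹ • (y - a) := ⟨_, rfl⟩
    have hc0 : (0:ℝ) < (1 - t) * r := mul_pos (by linarith) hr0
    have hu1 : ‖uh‖ = 1 := by
      rw [huhdef, norm_smul, Real.norm_eq_abs, abs_of_pos (inv_pos.mpr hr0),
        hxpnorm, inv_mul_cancel₀ hr0.ne']
    have hv1 : ‖vh‖ = 1 := by
      rw [hvhdef, norm_smul, Real.norm_eq_abs, abs_of_pos (inv_pos.mpr hc0), hya_eq,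
        inv_mul_cancel₀ hc0.ne']
    have hxpu : x - p = r • uh := by
      rw [huhdef, smul_smul, mul_inv_cancel₀ hr0.ne', one_smul]
    have hyav : y - a = ((1 - t) * r) • vh := by
      rw [hvhdef, smul_smul, mul_inv_cancel₀ hc0.ne', one_smul]
    have hxyu : x - y = (t * r) • uh := by
      have h3 : x - y = t • (x - p) := by rw [hydef]; module
      rw [h3, hxpu, smul_smul]
    have hxadecomp : x - a = (t * r) • uh + ((1 - t) * r) • vh := by
      rw [← hxyu, ← hyav]; abel
    have hcomb : t • uh + (1 - t) • vh = r⁻¹ • (x - a) := by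
      have c1 : r⁻¹ * (t * r) = t := by field_simp
      have c2 : r⁻¹ * ((1 - t) * r) = 1 - t := by field_simp
      rw [hxadecomp, smul_add, smul_smul, smul_smul, c1, c2]
    have hcombnorm : ‖t • uh + (1 - t) • vh‖ = 1 := by
      rw [hcomb, norm_smul, Real.norm_eq_abs, abs_of_pos (inv_pos.mpr hr0),
        hxa_eq, inv_mul_cancel₀ hr0.ne']
    by_cases huv : uh = vh
    · -- then a = p, contradicting disjointness
      have hxaeqp : x - a = x - p := by
        have h1 : x - a = r • (t • uh + (1 - t) • vh) := by
          rw [hcomb, smul_smul, mul_inv_cancel₀ hr0.ne', one_smul]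
        rw [huv] at h1
        have h2 : t • vh + (1 - t) • vh = vh := by module
        rw [h1, h2, hxpu, huv]
      have hpa0 : p - a = 0 := by
        have h' : p - a = (x - a) - (x - p) := by abel
        rw [h', hxaeqp, sub_self]
      have hap : a = p := (sub_eq_zero.mp hpa0).symm
      have : p ∈ P ∩ A := ⟨hpP, by rw [← hap]; exact haA⟩
      rw [hdisj] at this; exact this
    · -- contradiction with hpar
      have hseg : segment ℝ uh vh ⊆ Metric.sphere (0 : E) 1 :=
        seg_on_sphere uh vh hu1 hv1 t ht0 ht1 hcombnorm
      have hapform : a - p = ((1 - t) * r) • (uh - vh) := by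
        have h4 : a - p = (x - p) - (x - y) - (y - a) := by abel
        rw [h4, hxyu, hxpu, hyav]
        module
      have hapne : p ≠ a := by
        intro hpa
        rw [← hpa, sub_self] at hapform
        have : uh - vh = 0 := by
          rcases smul_eq_zero.mp hapform.symm with h | h
          · exact absurd h hc0.ne'
          · exact h
        exact huv (sub_eq_zero.mp this)
      apply hpar p hpP a haA hapne
      refine ⟨uh, vh, huv, hseg, Or.inr ?_⟩
      have hnuv : ‖uh - vh‖ ≠ 0 := by
        simp only [ne_eq, norm_eq_zero, sub_eq_zero]; exact huv
      have hnap : ‖a - p‖ = ((1 - t) * r) * ‖uh - vh‖ := by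
        rw [hapform, norm_smul, Real.norm_eq_abs, abs_of_pos hc0]
      have key : ‖a - p‖⁻¹ • (a - p) = ‖uh - vh‖⁻¹ • (uh - vh) := by
        rw [hnap, hapform, mul_inv, smul_smul]
        congr 1
        field_simp
        exact div_self (sub_pos.mpr ht1).ne'
      rw [key, ← neg_sub vh uh, norm_neg, smul_neg]
  · rintro ⟨hcl, hxX⟩
    refine ⟨hxX, ?_⟩
    have hsub : closure {x ∈ X | Metric.infDist x P < Metric.infDist x A} ⊆
        {x : E | Metric.infDist x P ≤ Metric.infDist x A} := by
      apply closure_minimal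
      · exact fun y hy => le_of_lt hy.2
      · exact isClosed_le (Metric.continuous_infDist_pt P) (Metric.continuous_infDist_pt A)
    exact hsub hcl
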